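/- Let H₁ and H₂ be finite-dimensional real Hilbert spaces and let A, B : H₂ → H₁ be non-zero linear maps. Then the bilinear form T_A is Birkhoff–James orthogonal to T_B, i.e., ‖T_{A+λB}‖ ≥ ‖T_A‖ for all real λ (where ‖T_C‖ = sup over unit vectors x, y of |⟨x, Cy⟩|), if and only if there exists a pair of unit vectors (x₀, y₀) with |⟨x₀, Ay₀⟩| = ‖T_A‖ such that ⟨x₀, By₀⟩ = 0. -/

import Mathlib

/-- The norm of the bilinear form induced by `C : H₂ →L[ℝ] H₁`, i.e. the supremum of
`|⟪x, C y⟫|` over unit vectors `x ∈ H₁`, `y ∈ H₂`. -/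
noncomputable def bilinearFormNorm
    {H₁ : Type*} [NormedAddCommGroup H₁] [InnerProductSpace ℝ H₁]
    {H₂ : Type*} [NormedAddCommGroup H₂] [InnerProductSpace ℝ H₂]
    (C : H₂ →L[ℝ] H₁) : ℝ :=
  sSup {r : ℝ | ∃ x : H₁, ∃ y : H₂, ‖x‖ = 1 ∧ ‖y‖ = 1 ∧ r = |(inner ℝ x (C y) : ℝ)|}

section helpers
open Metric Filter Set
variable {H₁ : Type*} [NormedAddCommGroup H₁] [InnerProductSpace ℝ H₁]
variable {H₂ : Type*} [NormedAddCommGroup H₂] [InnerProductSpace ℝ H₂]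

lemma bfn_bddAbove (C : H₂ →L[ℝ] H₁) :
    BddAbove {r : ℝ | ∃ x : H₁, ∃ y : H₂, ‖x‖ = 1 ∧ ‖y‖ = 1 ∧ r = |(inner ℝ x (C y) : ℝ)|} := by
  refine ⟨‖C‖, ?_⟩
  rintro r ⟨x, y, hx, hy, rfl⟩
  calc |(inner ℝ x (C y) : ℝ)| ≤ ‖x‖ * ‖C y‖ := abs_real_inner_le_norm x (C y)
    _ ≤ 1 * (‖C‖ * ‖y‖) := by rw [hx]; exact mul_le_mul_of_nonneg_left (C.le_opNorm y) one_pos.le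
    _ = ‖C‖ := by rw [hy]; ring

lemma le_bfn (C : H₂ →L[ℝ] H₁) {x : H₁} {y : H₂} (hx : ‖x‖ = 1) (hy : ‖y‖ = 1) :
    |(inner ℝ x (C y) : ℝ)| ≤ bilinearFormNorm C :=
  le_csSup (bfn_bddAbove C) ⟨x, y, hx, hy, rfl⟩

lemma apply_norm_le [Nontrivial H₁] (C : H₂ →L[ℝ] H₁) {y : H₂} (hy : ‖y‖ = 1) :
    ‖C y‖ ≤ bilinearFormNorm C := by
  by_cases h : C y = 0
  · rw [h, norm_zero]
    obtain ⟨x, hx⟩ : (sphere (0:H₁) 1).Nonempty := NormedSpace.sphere_nonempty.2 one_pos.le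
    rw [mem_sphere_zero_iff_norm] at hx
    exact le_trans (abs_nonneg _) (le_bfn C hx hy)
  · have hn : ‖C y‖ ≠ 0 := norm_ne_zero_iff.2 h
    have hx : ‖(‖C y‖⁻¹ • C y : H₁)‖ = 1 := by
      rw [norm_smul, norm_inv, norm_norm, inv_mul_cancel₀ hn]
    have := le_bfn C hx hy
    rwa [real_inner_smul_left, real_inner_self_eq_norm_sq,
      show ‖C y‖⁻¹ * ‖C y‖ ^ 2 = ‖C y‖ by field_simp,
      abs_of_nonneg (norm_nonneg _)] at this

lemma apply_norm_le' [Nontrivial H₁] (C : H₂ →L[ℝ] H₁) (y : H₂) :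
    ‖C y‖ ≤ bilinearFormNorm C * ‖y‖ := by
  by_cases h : y = 0
  · simp [h]
  · have hn : ‖y‖ ≠ 0 := norm_ne_zero_iff.2 h
    have h1 : ‖(‖y‖⁻¹ • y : H₂)‖ = 1 := by
      rw [norm_smul, norm_inv, norm_norm, inv_mul_cancel₀ hn]
    have := apply_norm_le C h1
    rw [map_smul, norm_smul, norm_inv, norm_norm] at this
    calc ‖C y‖ = ‖y‖ * (‖y‖⁻¹ * ‖C y‖) := by field_simp
      _ ≤ ‖y‖ * bilinearFormNorm C := mul_le_mul_of_nonneg_left this (norm_nonneg y)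
      _ = _ := mul_comm _ _

lemma bfn_le_max [Nontrivial H₁] [Nontrivial H₂] (C : H₂ →L[ℝ] H₁) {y₀ : H₂}
    (h : IsMaxOn (fun y => ‖C y‖) (sphere (0:H₂) 1) y₀) (hy₀ : ‖y₀‖ = 1) :
    bilinearFormNorm C ≤ ‖C y₀‖ := by
  apply csSup_le
  · obtain ⟨x, hx⟩ : (sphere (0:H₁) 1).Nonempty := NormedSpace.sphere_nonempty.2 one_pos.le
    exact ⟨_, x, y₀, mem_sphere_zero_iff_norm.1 hx, hy₀, rfl⟩
  · rintro r ⟨x, y, hx, hy, rfl⟩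
    calc |(inner ℝ x (C y) : ℝ)| ≤ ‖x‖ * ‖C y‖ := abs_real_inner_le_norm _ _
      _ = ‖C y‖ := by rw [hx, one_mul]
      _ ≤ ‖C y₀‖ := h (mem_sphere_zero_iff_norm.2 hy)

end helpers

section helpers2
open Metric Filter Set
variable {H₁ : Type*} [NormedAddCommGroup H₁] [InnerProductSpace ℝ H₁]
variable {H₂ : Type*} [NormedAddCommGroup H₂] [InnerProductSpace ℝ H₂]

lemma expand_sq {E : Type*} [NormedAddCommGroup E] [InnerProductSpace ℝ E]
    (a b : E) (s t : ℝ) :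
    ‖s • a + t • b‖ ^ 2 = s^2 * ‖a‖^2 + 2*s*t*(inner ℝ a b : ℝ) + t^2 * ‖b‖^2 := by
  rw [norm_add_sq_real, norm_smul, norm_smul, real_inner_smul_left, real_inner_smul_right,
    Real.norm_eq_abs, Real.norm_eq_abs, mul_pow, mul_pow, sq_abs, sq_abs]
  ring

lemma expand_sq1 {E : Type*} [NormedAddCommGroup E] [InnerProductSpace ℝ E]
    (a b : E) (t : ℝ) :
    ‖a + t • b‖ ^ 2 = ‖a‖^2 + 2*t*(inner ℝ a b : ℝ) + t^2 * ‖b‖^2 := by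
  have := expand_sq a b 1 t
  simpa using this

lemma bfn_nonneg [Nontrivial H₁] [Nontrivial H₂] (C : H₂ →L[ℝ] H₁) :
    0 ≤ bilinearFormNorm C := by
  obtain ⟨x, hx⟩ : (sphere (0:H₁) 1).Nonempty := NormedSpace.sphere_nonempty.2 one_pos.le
  obtain ⟨y, hy⟩ : (sphere (0:H₂) 1).Nonempty := NormedSpace.sphere_nonempty.2 one_pos.le
  exact le_trans (abs_nonneg _)
    (le_bfn C (mem_sphere_zero_iff_norm.1 hx) (mem_sphere_zero_iff_norm.1 hy))

lemma eigen_add (σ : ℝ) (hσ : 0 ≤ σ) (A : H₂ →L[ℝ] H₁)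
    (hq : ∀ w : H₂, ‖A w‖ ≤ σ * ‖w‖)
    {y z : H₂} (hy : ‖A y‖ = σ * ‖y‖) (hz : ‖A z‖ = σ * ‖z‖) (s t : ℝ) :
    ‖A (s • y + t • z)‖ = σ * ‖s • y + t • z‖ := by
  have qnn : ∀ w : H₂, ‖A w‖^2 ≤ σ^2 * ‖w‖^2 := by
    intro w
    have h1 := hq w
    nlinarith [norm_nonneg (A w), norm_nonneg w]
  have hAw : ∀ (s t : ℝ), A (s • y + t • z) = s • (A y) + t • (A z) := by
    intro s t; simp
  have hexp : ∀ (s t : ℝ), ‖A (s • y + t • z)‖^2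
      = s^2*‖A y‖^2 + 2*s*t*(inner ℝ (A y) (A z) : ℝ) + t^2*‖A z‖^2 := by
    intro s t; rw [hAw, expand_sq]
  have hφc : ∀ c : ℝ, 0 ≤ 2*c*(σ^2 * (inner ℝ y z : ℝ) - (inner ℝ (A y) (A z) : ℝ)) := by
    intro c
    have h1 := qnn ((1:ℝ) • y + c • z)
    have hy2 : ‖A y‖^2 = σ^2*‖y‖^2 := by rw [hy]; ring
    have hz2 : ‖A z‖^2 = σ^2*‖z‖^2 := by rw [hz]; ring
    rw [hexp 1 c, expand_sq y z 1 c] at h1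
    nlinarith [h1, hy2, hz2]
  have hφ : σ^2 * (inner ℝ y z : ℝ) = (inner ℝ (A y) (A z) : ℝ) := by
    have h1 := hφc 1
    have h2 := hφc (-1)
    linarith
  have hsq : ‖A (s • y + t • z)‖^2 = (σ * ‖s • y + t • z‖)^2 := by
    have hy2 : ‖A y‖^2 = σ^2*‖y‖^2 := by rw [hy]; ring
    have hz2 : ‖A z‖^2 = σ^2*‖z‖^2 := by rw [hz]; ring
    rw [hexp s t, mul_pow, expand_sq y z s t, ← hφ, hy2, hz2]
    ring
  calc ‖A (s • y + t • z)‖ = Real.sqrt (‖A (s • y + t • z)‖^2) :=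
        (Real.sqrt_sq (norm_nonneg _)).symm
    _ = Real.sqrt ((σ * ‖s • y + t • z‖)^2) := by rw [hsq]
    _ = σ * ‖s • y + t • z‖ := Real.sqrt_sq (by positivity)

end helpers2

section helpers3
open Metric Filter Set Topology
variable {H₁ : Type*} [NormedAddCommGroup H₁] [InnerProductSpace ℝ H₁]
variable {H₂ : Type*} [NormedAddCommGroup H₂] [InnerProductSpace ℝ H₂]

lemma exists_nonneg_norming [Nontrivial H₁] [Nontrivial H₂] [FiniteDimensional ℝ H₂]
    (A B : H₂ →L[ℝ] H₁)
    (h : ∀ t : ℝ, bilinearFormNorm A ≤ bilinearFormNorm (A + t • B)) :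
    ∃ y : H₂, ‖y‖ = 1 ∧ ‖A y‖ = bilinearFormNorm A ∧
      0 ≤ (inner ℝ (A y) (B y) : ℝ) := by
  set σ := bilinearFormNorm A with hσdef
  have hσ0 : 0 ≤ σ := bfn_nonneg A
  -- maximizers on the sphere
  have hmax : ∀ t : ℝ, ∃ y : H₂, ‖y‖ = 1 ∧ σ ≤ ‖A y + t • B y‖ := by
    intro t
    obtain ⟨y₀, hy₀m, hm⟩ := (isCompact_sphere (0:H₂) 1).exists_isMaxOn
      (NormedSpace.sphere_nonempty.2 one_pos.le)
      ((A + t • B).continuous.norm.continuousOn :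
        ContinuousOn (fun y => ‖(A + t • B) y‖) _)
    have hy₀ : ‖y₀‖ = 1 := mem_sphere_zero_iff_norm.1 hy₀m
    have h1 : σ ≤ ‖(A + t • B) y₀‖ := (h t).trans (bfn_le_max _ hm hy₀)
    refine ⟨y₀, hy₀, ?_⟩
    simpa using h1
  choose u hu1 hu2 using fun n : ℕ => hmax (((n:ℝ)+1)⁻¹)
  -- pointwise estimates
  set t : ℕ → ℝ := fun n => ((n:ℝ)+1)⁻¹ with htdef
  have htpos : ∀ n, 0 < t n := fun n => by positivity
  have hBle : ∀ n, ‖B (u n)‖ ≤ ‖B‖ := by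
    intro n
    calc ‖B (u n)‖ ≤ ‖B‖ * ‖u n‖ := B.le_opNorm _
      _ = ‖B‖ := by rw [hu1 n, mul_one]
  have hAle : ∀ n, ‖A (u n)‖ ≤ σ := fun n => apply_norm_le A (hu1 n)
  have hkey : ∀ n, σ^2 ≤ ‖A (u n)‖^2 + 2*(t n)*(inner ℝ (A (u n)) (B (u n)) : ℝ)
      + (t n)^2 * ‖B (u n)‖^2 := by
    intro n
    have h1 := hu2 n
    have h2 : σ^2 ≤ ‖A (u n) + t n • B (u n)‖^2 := by
      have := norm_nonneg (A (u n) + t n • B (u n))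
      nlinarith
    rwa [expand_sq1] at h2
  have hIbound : ∀ n, |(inner ℝ (A (u n)) (B (u n)) : ℝ)| ≤ σ * ‖B‖ := by
    intro n
    calc |(inner ℝ (A (u n)) (B (u n)) : ℝ)| ≤ ‖A (u n)‖ * ‖B (u n)‖ :=
        abs_real_inner_le_norm _ _
      _ ≤ σ * ‖B‖ := mul_le_mul (hAle n) (hBle n) (norm_nonneg _) hσ0
  have hInn_lb : ∀ n, -(t n) * ‖B‖^2 / 2 ≤ (inner ℝ (A (u n)) (B (u n)) : ℝ) := by
    intro n
    have h1 := hkey n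
    have h2 : ‖A (u n)‖^2 ≤ σ^2 := by nlinarith [hAle n, norm_nonneg (A (u n))]
    have h3 : ‖B (u n)‖^2 ≤ ‖B‖^2 := by nlinarith [hBle n, norm_nonneg (B (u n))]
    have h4 := htpos n
    nlinarith
  have hA_lb : ∀ n, σ^2 - 2*(t n)*(σ*‖B‖) - (t n)^2*‖B‖^2 ≤ ‖A (u n)‖^2 := by
    intro n
    have h1 := hkey n
    have h3 : ‖B (u n)‖^2 ≤ ‖B‖^2 := by nlinarith [hBle n, norm_nonneg (B (u n))]
    have h4 := (htpos n).le
    have h5 := hIbound n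
    have h6 : (inner ℝ (A (u n)) (B (u n)) : ℝ) ≤ σ * ‖B‖ := (abs_le.1 h5).2
    nlinarith
  -- subsequence converging on the sphere
  obtain ⟨y, hymem, φ, hφmono, hconv⟩ := (isCompact_sphere (0:H₂) 1).tendsto_subseq
    (fun n => mem_sphere_zero_iff_norm.2 (hu1 n) : ∀ n, u n ∈ sphere (0:H₂) 1)
  have hy1 : ‖y‖ = 1 := mem_sphere_zero_iff_norm.1 hymem
  have htzero : Tendsto (fun n => t (φ n)) atTop (𝓝 0) := by
    have h1 : Tendsto (fun n : ℕ => ((n:ℝ)+1)⁻¹) atTop (𝓝 0) := by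
      simpa [one_div] using tendsto_one_div_add_atTop_nhds_zero_nat (𝕜 := ℝ)
    exact h1.comp hφmono.tendsto_atTop
  have hAconv : Tendsto (fun n => ‖A (u (φ n))‖^2) atTop (𝓝 (‖A y‖^2)) := by
    have hc : Continuous fun v : H₂ => ‖A v‖^2 := (A.continuous.norm).pow 2
    exact (hc.tendsto y).comp hconv
  have hIconv : Tendsto (fun n => (inner ℝ (A (u (φ n))) (B (u (φ n))) : ℝ)) atTop
      (𝓝 (inner ℝ (A y) (B y) : ℝ)) := by
    have hc : Continuous fun v : H₂ => (inner ℝ (A v) (B v) : ℝ) :=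
      A.continuous.inner B.continuous
    exact (hc.tendsto y).comp hconv
  have hlow : Tendsto (fun n => σ^2 - 2*(t (φ n))*(σ*‖B‖) - (t (φ n))^2*‖B‖^2)
      atTop (𝓝 (σ^2)) := by
    have hc : Continuous fun c : ℝ => σ^2 - 2*c*(σ*‖B‖) - c^2*‖B‖^2 := by fun_prop
    have := (hc.tendsto 0).comp htzero
    simpa [Function.comp_def] using this
  have hlow2 : Tendsto (fun n => -(t (φ n)) * ‖B‖^2 / 2) atTop (𝓝 0) := by
    have hc : Continuous fun c : ℝ => -c * ‖B‖^2 / 2 := by fun_prop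
    have := (hc.tendsto 0).comp htzero
    simpa [Function.comp_def] using this
  have hAy2 : σ^2 ≤ ‖A y‖^2 :=
    le_of_tendsto_of_tendsto' hlow hAconv (fun n => hA_lb (φ n))
  have hAy : ‖A y‖ = σ := by
    have h1 : ‖A y‖ ≤ σ := apply_norm_le A hy1
    nlinarith [norm_nonneg (A y)]
  have hInn : 0 ≤ (inner ℝ (A y) (B y) : ℝ) :=
    le_of_tendsto_of_tendsto' hlow2 hIconv (fun n => hInn_lb (φ n))
  exact ⟨y, hy1, hAy, hInn⟩

end helpers3


/-- **Theorem 2.8 (Bilinearform).** For finite-dimensional real Hilbert spaces `H₁, H₂`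
and non-zero linear maps `A, B : H₂ → H₁`, the bilinear form `T_A` is Birkhoff–James
orthogonal to `T_B` iff there exists `(x₀, y₀) ∈ M_{T_A}` with `⟪x₀, B y₀⟫ = 0`. -/
theorem bilinear_form_birkhoff_orthogonality
    {H₁ : Type*} [NormedAddCommGroup H₁] [InnerProductSpace ℝ H₁] [FiniteDimensional ℝ H₁]
    {H₂ : Type*} [NormedAddCommGroup H₂] [InnerProductSpace ℝ H₂] [FiniteDimensional ℝ H₂]
    (A B : H₂ →L[ℝ] H₁) (hA : A ≠ 0) (hB : B ≠ 0) :
    (∀ t : ℝ, bilinearFormNorm A ≤ bilinearFormNorm (A + t • B)) ↔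
      ∃ x₀ : H₁, ∃ y₀ : H₂, ‖x₀‖ = 1 ∧ ‖y₀‖ = 1 ∧
        |(inner ℝ x₀ (A y₀) : ℝ)| = bilinearFormNorm A ∧
        (inner ℝ x₀ (B y₀) : ℝ) = 0 := by
  constructor
  · intro h
    obtain ⟨y₀', hAy₀'⟩ : ∃ y, A y ≠ 0 := by
      by_contra hc; push_neg at hc; exact hA (by ext y; simpa using hc y)
    have : Nontrivial H₁ := ⟨⟨A y₀', 0, hAy₀'⟩⟩
    have : Nontrivial H₂ := ⟨⟨y₀', 0, fun hy => hAy₀' (by rw [hy]; simp)⟩⟩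
    set σ := bilinearFormNorm A with hσdef
    have hσ0 : 0 ≤ σ := bfn_nonneg A
    have hσpos : 0 < σ := by
      have hn : ‖y₀'‖ ≠ 0 :=
        fun h0 => hAy₀' (by rw [show y₀' = 0 from norm_eq_zero.1 h0]; simp)
      have h1 : ‖(‖y₀'‖⁻¹ • y₀' : H₂)‖ = 1 := by
        rw [norm_smul, norm_inv, norm_norm, inv_mul_cancel₀ hn]
      have h2 : 0 < ‖A (‖y₀'‖⁻¹ • y₀')‖ := by
        rw [map_smul, norm_smul, norm_inv, norm_norm]
        have := norm_pos_iff.2 hAy₀'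
        have : 0 < ‖y₀'‖⁻¹ := by positivity
        positivity
      exact lt_of_lt_of_le h2 (apply_norm_le A h1)
    obtain ⟨yp, hyp1, hyp2, hyp3⟩ := exists_nonneg_norming A B h
    have h' : ∀ t : ℝ, σ ≤ bilinearFormNorm (A + t • (-B)) := by
      intro t; rw [smul_neg, ← neg_smul]; exact h (-t)
    obtain ⟨ym, hym1, hym2, hym3⟩ := exists_nonneg_norming A (-B) h'
    have hym3' : (inner ℝ (A ym) (B ym) : ℝ) ≤ 0 := by
      rw [ContinuousLinearMap.neg_apply, inner_neg_right] at hym3; linarith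
    have main : ∃ y : H₂, ‖y‖ = 1 ∧ ‖A y‖ = σ ∧ (inner ℝ (A y) (B y) : ℝ) = 0 := by
      by_cases hcase : ym = -yp
      · refine ⟨yp, hyp1, hyp2, ?_⟩
        have heq : (inner ℝ (A ym) (B ym) : ℝ) = (inner ℝ (A yp) (B yp) : ℝ) := by
          rw [hcase]; simp
        linarith [hym3', hyp3, heq.symm.le, heq.le]
      · have hq : ∀ w : H₂, ‖A w‖ ≤ σ * ‖w‖ := fun w => apply_norm_le' A w
        have hyp2' : ‖A yp‖ = σ * ‖yp‖ := by rw [hyp1, hyp2, mul_one]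
        have hym2' : ‖A ym‖ = σ * ‖ym‖ := by rw [hym1, hym2, mul_one]
        set w : ℝ → H₂ := fun c => (1 - c) • yp + c • ym with hwdef
        have hAw : ∀ c, ‖A (w c)‖ = σ * ‖w c‖ := fun c =>
          eigen_add σ hσ0 A hq hyp2' hym2' (1-c) c
        have hwne : ∀ c ∈ Set.Icc (0:ℝ) 1, w c ≠ 0 := by
          intro c hc h0
          obtain ⟨hc0, hc1⟩ := hc
          have he : (1-c) • yp = -(c • ym) := eq_neg_of_add_eq_zero_left h0
          have h1 : ‖(1-c) • yp‖ = ‖c • ym‖ := by rw [he, norm_neg]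
          rw [norm_smul, norm_smul, hyp1, hym1, mul_one, mul_one, Real.norm_eq_abs,
            Real.norm_eq_abs, abs_of_nonneg (by linarith), abs_of_nonneg hc0] at h1
          have hc12 : c = 1/2 := by linarith
          apply hcase
          have h2 := congrArg (fun v : H₂ => (2:ℝ) • v) h0
          simp only [hwdef, hc12, smul_add, smul_smul, smul_zero] at h2
          norm_num at h2
          exact eq_neg_of_add_eq_zero_right h2
        have hwcont : Continuous w := by fun_prop
        have hgcont : Continuous fun c => (inner ℝ (A (w c)) (B (w c)) : ℝ) :=
          (A.continuous.comp hwcont).inner (B.continuous.comp hwcont)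
        have hg0 : (inner ℝ (A (w 0)) (B (w 0)) : ℝ) = (inner ℝ (A yp) (B yp) : ℝ) := by
          simp [hwdef]
        have hg1 : (inner ℝ (A (w 1)) (B (w 1)) : ℝ) = (inner ℝ (A ym) (B ym) : ℝ) := by
          simp [hwdef]
        have hmem : (0:ℝ) ∈ Set.Icc ((inner ℝ (A (w 1)) (B (w 1)) : ℝ))
            ((inner ℝ (A (w 0)) (B (w 0)) : ℝ)) := by
          rw [hg0, hg1]; exact ⟨hym3', hyp3⟩
        obtain ⟨c, hcmem, hc0⟩ :=
          intermediate_value_Icc' (zero_le_one (α := ℝ)) hgcont.continuousOn hmem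
        have hv : w c ≠ 0 := hwne c hcmem
        have hnv : ‖w c‖ ≠ 0 := norm_ne_zero_iff.2 hv
        refine ⟨‖w c‖⁻¹ • w c, ?_, ?_, ?_⟩
        · rw [norm_smul, norm_inv, norm_norm, inv_mul_cancel₀ hnv]
        · rw [map_smul, norm_smul, norm_inv, norm_norm, hAw c]
          field_simp
        · have hc0' : (inner ℝ (A (w c)) (B (w c)) : ℝ) = 0 := hc0
          rw [map_smul, map_smul, real_inner_smul_left, real_inner_smul_right, hc0']
          ring
    obtain ⟨y, hy1, hy2, hy3⟩ := main
    refine ⟨σ⁻¹ • A y, y, ?_, hy1, ?_, ?_⟩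
    · rw [norm_smul, norm_inv, Real.norm_eq_abs, abs_of_pos hσpos, hy2,
        inv_mul_cancel₀ hσpos.ne']
    · rw [real_inner_smul_left, real_inner_self_eq_norm_sq, hy2]
      rw [abs_of_nonneg (by positivity)]
      field_simp
    · rw [real_inner_smul_left, hy3, mul_zero]
  · rintro ⟨x₀, y₀, hx, hy, habs, hperp⟩ t
    have h1 : (inner ℝ x₀ ((A + t • B) y₀) : ℝ) = inner ℝ x₀ (A y₀) := by
      simp [inner_add_right, real_inner_smul_right, hperp]
    calc bilinearFormNorm A = |(inner ℝ x₀ (A y₀) : ℝ)| := habs.symm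
      _ = |(inner ℝ x₀ ((A + t • B) y₀) : ℝ)| := by rw [h1]
      _ ≤ _ := le_bfn _ hx hy
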